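/- Under the stationary mispricing density p, the second moment satisfies E[z²] = (1 - P_trade)·γ²/3 + P_trade·((γ + σ/√(2λ))² + σ²/(2λ)), where P_trade = 1/(1 + √(2λ)γ/σ). -/

import Mathlib

open MeasureTheory Real

open Filter Topology Set in
lemma exp_moment_aux (a γ : ℝ) (ha : 0 < a) :
    IntegrableOn (fun x : ℝ => x ^ 2 * Real.exp (-a * (x - γ))) (Ioi γ) ∧
    ∫ x in Ioi γ, x ^ 2 * Real.exp (-a * (x - γ))
      = γ ^ 2 / a + 2 * γ / a ^ 2 + 2 / a ^ 3 := by
  have ha' : a ≠ 0 := ne_of_gt ha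
  set F : ℝ → ℝ := fun z => -(Real.exp (-a * (z - γ)) * (z ^ 2 / a + 2 * z / a ^ 2 + 2 / a ^ 3))
    with hF
  have hderiv : ∀ x ∈ Ici γ, HasDerivAt F (x ^ 2 * Real.exp (-a * (x - γ))) x := by
    intro x _
    have h1 : HasDerivAt (fun z : ℝ => -a * (z - γ)) (-a) x := by
      simpa using ((hasDerivAt_id x).sub_const γ).const_mul (-a)
    have h2 : HasDerivAt (fun z : ℝ => Real.exp (-a * (z - γ)))
        (Real.exp (-a * (x - γ)) * (-a)) x := h1.exp
    have h3 : HasDerivAt (fun z : ℝ => z ^ 2 / a + 2 * z / a ^ 2 + 2 / a ^ 3)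
        (2 * x / a + 2 / a ^ 2) x := by
      have := (((hasDerivAt_pow 2 x).div_const a).add
        (((hasDerivAt_id x).const_mul 2).div_const (a ^ 2))).add_const (2 / a ^ 3)
      refine this.congr_deriv ?_
      push_cast
      ring
    have h4 := (h2.mul h3).neg
    refine h4.congr_deriv ?_
    field_simp
    ring
  have hpos : ∀ x ∈ Ioi γ, 0 ≤ x ^ 2 * Real.exp (-a * (x - γ)) := by
    intro x _; positivity
  have key : ∀ n : ℕ, Tendsto (fun z : ℝ => z ^ n * Real.exp (-(a * z))) atTop (𝓝 0) := by
    intro n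
    have hcomp : Tendsto (fun z : ℝ => a * z) atTop atTop :=
      Tendsto.const_mul_atTop ha tendsto_id
    have h := (tendsto_pow_mul_exp_neg_atTop_nhds_zero n).comp hcomp
    have h2 := h.div_const (a ^ n)
    have heq : (fun z : ℝ => ((a * z) ^ n * Real.exp (-(a * z))) / a ^ n)
        = fun z : ℝ => z ^ n * Real.exp (-(a * z)) := by
      funext z
      rw [mul_pow]
      field_simp
    rw [Function.comp_def] at h2
    rw [heq] at h2
    simpa using h2
  have hFtop : Tendsto F atTop (𝓝 0) := by
    have hcomb : Tendsto (fun z : ℝ => -(Real.exp (a * γ) *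
        ((z ^ 2 * Real.exp (-(a * z))) / a + 2 * ((z ^ 1 * Real.exp (-(a * z))) / a ^ 2)
          + 2 * ((z ^ 0 * Real.exp (-(a * z))) / a ^ 3)))) atTop
        (𝓝 (-(Real.exp (a * γ) * (0 / a + 2 * (0 / a ^ 2) + 2 * (0 / a ^ 3))))) :=
      (tendsto_const_nhds.mul ((((key 2).div_const a).add
        (((key 1).div_const (a ^ 2)).const_mul 2)).add
        (((key 0).div_const (a ^ 3)).const_mul 2))).neg
    have heq : F = fun z : ℝ => -(Real.exp (a * γ) *
        ((z ^ 2 * Real.exp (-(a * z))) / a + 2 * ((z ^ 1 * Real.exp (-(a * z))) / a ^ 2)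
          + 2 * ((z ^ 0 * Real.exp (-(a * z))) / a ^ 3))) := by
      funext z
      simp only [hF]
      rw [show -a * (z - γ) = -(a * z) + a * γ by ring, Real.exp_add]
      ring
    rw [heq]
    convert hcomb using 2
    simp
  constructor
  · exact integrableOn_Ioi_deriv_of_nonneg' hderiv hpos hFtop
  · rw [integral_Ioi_of_hasDerivAt_of_nonneg' hderiv hpos hFtop]
    simp [hF]

open Set in
theorem second_moment_mispricing
    (σ lam γ : ℝ) (hσ : 0 < σ) (hlam : 0 < lam) (hγ : 0 < γ)
    (η : ℝ) (hη : η = Real.sqrt (2 * lam) * γ / σ)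
    (Ptrade : ℝ) (hPt : Ptrade = 1 / (1 + η))
    (π₀ : ℝ) (hπ₀ : π₀ = η / (1 + η))
    (πp : ℝ) (hπp : πp = 1 / (2 * (1 + η)))
    (p : ℝ → ℝ)
    (hp : ∀ z, p z = if |z| ≤ γ then π₀ / (2 * γ)
        else πp * (η / γ) * Real.exp (-(η / γ) * (|z| - γ))) :
    ∫ z : ℝ, z ^ 2 * p z
      = (1 - Ptrade) * γ ^ 2 / 3
        + Ptrade * ((γ + σ / Real.sqrt (2 * lam)) ^ 2 + σ ^ 2 / (2 * lam)) := by
  have hs : 0 < Real.sqrt (2 * lam) := Real.sqrt_pos.mpr (by linarith)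
  have hs2 : Real.sqrt (2 * lam) ^ 2 = 2 * lam := Real.sq_sqrt (by linarith)
  have hηpos : 0 < η := by rw [hη]; positivity
  set a : ℝ := η / γ with hadef
  have ha : 0 < a := div_pos hηpos hγ
  set f : ℝ → ℝ := fun t => t ^ 2 * (if t ≤ γ then π₀ / (2 * γ)
      else πp * a * Real.exp (-a * (t - γ))) with hfdef
  have step1 : (fun z : ℝ => z ^ 2 * p z) = fun z => f |z| := by
    funext z
    rw [hfdef]
    simp only [hp z, sq_abs]
  rw [step1, integral_comp_abs]
  obtain ⟨hint, hval⟩ := exp_moment_aux a γ ha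
  -- integral over Ioi γ
  have hEq1 : EqOn (fun x : ℝ => πp * a * (x ^ 2 * Real.exp (-a * (x - γ)))) f (Ioi γ) := by
    intro x hx
    rw [hfdef]
    simp only [if_neg (not_le.mpr (mem_Ioi.mp hx))]
    ring
  have hintf1 : IntegrableOn f (Ioi γ) := by
    have h' : IntegrableOn (fun x : ℝ => πp * a * (x ^ 2 * Real.exp (-a * (x - γ)))) (Ioi γ) :=
      hint.const_mul (πp * a)
    exact h'.congr_fun hEq1 measurableSet_Ioi
  have hI1 : ∫ x in Ioi γ, f x = πp * a * (γ ^ 2 / a + 2 * γ / a ^ 2 + 2 / a ^ 3) := by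
    rw [← setIntegral_congr_fun measurableSet_Ioi hEq1, integral_const_mul, hval]
  -- integral over Ioc 0 γ
  have hEq2 : EqOn (fun x : ℝ => π₀ / (2 * γ) * x ^ 2) f (Ioc 0 γ) := by
    intro x hx
    rw [hfdef]
    simp only [if_pos hx.2]
    ring
  have hintf2 : IntegrableOn f (Ioc 0 γ) := by
    have h' : IntegrableOn (fun x : ℝ => π₀ / (2 * γ) * x ^ 2) (Ioc 0 γ) :=
      (continuous_const.mul (continuous_pow 2)).integrableOn_Ioc
    exact h'.congr_fun hEq2 measurableSet_Ioc
  have hI2 : ∫ x in Ioc 0 γ, f x = π₀ / (2 * γ) * (γ ^ 3 / 3) := by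
    rw [← setIntegral_congr_fun measurableSet_Ioc hEq2, integral_const_mul]
    have : ∫ x in Ioc (0:ℝ) γ, x ^ 2 = ∫ x in (0:ℝ)..γ, x ^ 2 :=
      (intervalIntegral.integral_of_le hγ.le).symm
    rw [this, integral_pow]
    norm_num
  -- split
  have hsplit : ∫ x in Ioi (0:ℝ), f x = (∫ x in Ioc (0:ℝ) γ, f x) + ∫ x in Ioi γ, f x := by
    rw [← setIntegral_union (Ioc_disjoint_Ioi le_rfl) measurableSet_Ioi hintf2 hintf1,
      Ioc_union_Ioi_eq_Ioi hγ.le]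
  rw [hsplit, hI1, hI2]
  -- final algebra
  have hγ' : γ ≠ 0 := ne_of_gt hγ
  have hσ' : σ ≠ 0 := ne_of_gt hσ
  have hs' : Real.sqrt (2 * lam) ≠ 0 := ne_of_gt hs
  have h1η : (1 : ℝ) + η ≠ 0 := by positivity
  rw [hPt, hπ₀, hπp, hadef, hη]
  rw [show (2 : ℝ) * lam = Real.sqrt (2 * lam) ^ 2 from hs2.symm]
  field_simp
  rw [Real.sqrt_sq (Real.sqrt_nonneg _)]
  ring
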